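/- Let K be a positive integer, let (αₙ) be a sequence of real skew-symmetric K×K matrices converging in matrix norm to a skew-symmetric matrix α, and assume the sequence is non-degenerating: there exists N such that for every n ≥ N, every 2π-periodic continuously differentiable map u: ℝ → ℝ^K satisfying u' + α·u = 0 also satisfies u' + αₙ·u = 0. Then there exist a constant C > 0 and an index N' such that for all n ≥ N' and every twice continuously differentiable 2π-periodic map u: ℝ → ℝ^K one has ∫₀^{2π} ‖u'(θ) + αₙ·u(θ)‖² dθ ≤ C ∫₀^{2π} ‖u''(θ) + 2αₙ·u'(θ) + αₙ²·u(θ)‖² dθ. -/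

import Mathlib

open Real MeasureTheory Filter
open scoped Matrix RealInnerProductSpace

/-- The action of a `K × K` real matrix on `ℝ^K` (with the Euclidean norm). -/
noncomputable def matAct {K : ℕ} (α : Matrix (Fin K) (Fin K) ℝ)
    (x : EuclideanSpace ℝ (Fin K)) : EuclideanSpace ℝ (Fin K) :=
  Matrix.toEuclideanLin α x

noncomputable def matCLM {K : ℕ} (α : Matrix (Fin K) (Fin K) ℝ) :
    EuclideanSpace ℝ (Fin K) →L[ℝ] EuclideanSpace ℝ (Fin K) :=
  LinearMap.toContinuousLinearMap (Matrix.toEuclideanLin α)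

lemma matCLM_apply {K : ℕ} (α : Matrix (Fin K) (Fin K) ℝ) (x : EuclideanSpace ℝ (Fin K)) :
    matCLM α x = matAct α x := rfl

lemma matCLM_skew {K : ℕ} {α : Matrix (Fin K) (Fin K) ℝ} (h : αᵀ = -α)
    (x y : EuclideanSpace ℝ (Fin K)) :
    ⟪matCLM α x, y⟫ = -⟪x, matCLM α y⟫ := by
  have hH : αᴴ = -α := by
    rw [Matrix.conjTranspose]
    ext i j
    have := congrFun (congrFun h i) j
    simp at this ⊢ <;> linarith
  have h1 : Matrix.toEuclideanLin αᴴ = LinearMap.adjoint (Matrix.toEuclideanLin α) :=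
    Matrix.toEuclideanLin_conjTranspose_eq_adjoint α
  rw [hH] at h1
  have h2 : ⟪(LinearMap.adjoint (Matrix.toEuclideanLin α)) y, x⟫
      = ⟪y, Matrix.toEuclideanLin α x⟫ := LinearMap.adjoint_inner_left _ _ _
  rw [← h1] at h2
  simp only [map_neg, LinearMap.neg_apply] at h2
  have : matCLM α y = Matrix.toEuclideanLin α y := rfl
  have h3 : ⟪matCLM α x, y⟫ = ⟪y, Matrix.toEuclideanLin α x⟫ := real_inner_comm _ _
  rw [h3, ← h2, inner_neg_left]
  congr 1
  exact real_inner_comm _ _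

noncomputable instance matCLM_ratAlg {K : ℕ} :
    NormedAlgebra ℚ (EuclideanSpace ℝ (Fin K) →L[ℝ] EuclideanSpace ℝ (Fin K)) :=
  NormedAlgebra.restrictScalars ℚ ℝ _

section Flow

variable {K : ℕ} (B : EuclideanSpace ℝ (Fin K) →L[ℝ] EuclideanSpace ℝ (Fin K))

local notation "expR" => NormedSpace.exp

lemma hasDerivAt_flow (x : EuclideanSpace ℝ (Fin K)) (t : ℝ) :
    HasDerivAt (fun s : ℝ => expR (s • B) x) (expR (t • B) (B x)) t := by
  have h := (hasDerivAt_exp_smul_const B t).clm_apply (hasDerivAt_const t x)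
  simpa using h

set_option synthInstance.maxHeartbeats 1000000 in
lemma flow_add (s t : ℝ) (x : EuclideanSpace ℝ (Fin K)) :
    expR ((s + t) • B) x = expR (s • B) (expR (t • B) x) := by
  have hc : Commute (s • B) (t • B) := by
    show (s • B) * (t • B) = (t • B) * (s • B)
    ext1 z
    simp only [ContinuousLinearMap.mul_apply, ContinuousLinearMap.smul_apply, _root_.map_smul]
    rw [smul_comm]
  have e : (s + t) • B = s • B + t • B := add_smul s t B
  rw [e, NormedSpace.exp_add_of_commute hc]
  rfl

lemma flow_zero (x : EuclideanSpace ℝ (Fin K)) : expR ((0:ℝ) • B) x = x := by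
  have e : (0:ℝ) • B = 0 := zero_smul ℝ B
  rw [e, NormedSpace.exp_zero]
  rfl

lemma flow_cancel (s : ℝ) (x : EuclideanSpace ℝ (Fin K)) :
    expR (s • B) (expR ((-s) • B) x) = x := by
  rw [← flow_add, add_neg_cancel, flow_zero]

lemma flow_comm (s : ℝ) (x : EuclideanSpace ℝ (Fin K)) :
    expR (s • B) (B x) = B (expR (s • B) x) := by
  have hc0 : Commute B (s • B) := by
    show B * (s • B) = (s • B) * B
    ext1 z
    simp only [ContinuousLinearMap.mul_apply, ContinuousLinearMap.smul_apply, _root_.map_smul]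
  have hc : Commute B (expR (s • B)) := hc0.exp_right
  have := congrArg (fun (T : EuclideanSpace ℝ (Fin K) →L[ℝ] EuclideanSpace ℝ (Fin K)) => T x) hc.eq
  simpa [ContinuousLinearMap.mul_apply] using this.symm

variable {B}

lemma inner_flow (hB : ∀ a b, ⟪B a, b⟫ = -⟪a, B b⟫) (t : ℝ)
    (x y : EuclideanSpace ℝ (Fin K)) :
    ⟪expR (t • B) x, expR (t • B) y⟫ = ⟪x, y⟫ := by
  have key : ∀ s : ℝ, HasDerivAt (fun r : ℝ => ⟪expR (r • B) x, expR (r • B) y⟫) 0 s := by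
    intro s
    have h := (hasDerivAt_flow B x s).inner ℝ (hasDerivAt_flow B y s)
    have hz : ⟪expR (s • B) x, expR (s • B) (B y)⟫ + ⟪expR (s • B) (B x), expR (s • B) y⟫
        = 0 := by
      rw [flow_comm B s y, flow_comm B s x, hB (expR (s • B) x) (expR (s • B) y)]
      ring
    rwa [hz] at h
  have hdiff : Differentiable ℝ (fun r : ℝ => ⟪expR (r • B) x, expR (r • B) y⟫) :=
    fun s => (key s).differentiableAt
  have hconst := is_const_of_deriv_eq_zero hdiff (fun s => (key s).deriv) t 0
  rw [hconst]
  rw [flow_zero, flow_zero]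

lemma norm_flow (hB : ∀ a b, ⟪B a, b⟫ = -⟪a, B b⟫) (t : ℝ) (x : EuclideanSpace ℝ (Fin K)) :
    ‖expR (t • B) x‖ = ‖x‖ := by
  have h := inner_flow hB t x x
  rw [real_inner_self_eq_norm_mul_norm, real_inner_self_eq_norm_mul_norm] at h
  have h1 : (0:ℝ) ≤ ‖expR (t • B) x‖ := norm_nonneg _
  have h2 : (0:ℝ) ≤ ‖x‖ := norm_nonneg _
  nlinarith

lemma inner_flow_left (hB : ∀ a b, ⟪B a, b⟫ = -⟪a, B b⟫) (t : ℝ)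
    (x y : EuclideanSpace ℝ (Fin K)) :
    ⟪expR (t • B) x, y⟫ = ⟪x, expR ((-t) • B) y⟫ := by
  conv_lhs => rw [show y = expR (t • B) (expR ((-t) • B) y) from (flow_cancel B t y).symm]
  exact inner_flow hB t x _

end Flow

lemma integral_abs_le_sqrt_mul_sqrt (f : ℝ → ℝ) (hf : Continuous f) (hnn : ∀ x, 0 ≤ f x)
    {b : ℝ} (hb : 0 ≤ b) :
    (∫ x in (0:ℝ)..b, f x) ≤ Real.sqrt b * Real.sqrt (∫ x in (0:ℝ)..b, f x ^ 2) := by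
  set I := ∫ x in (0:ℝ)..b, f x with hI
  set J := ∫ x in (0:ℝ)..b, f x ^ 2 with hJ
  have hfint : IntervalIntegrable f volume 0 b := hf.intervalIntegrable 0 b
  have hf2int : IntervalIntegrable (fun x => f x ^ 2) volume 0 b :=
    (hf.pow 2).intervalIntegrable 0 b
  have hI0 : 0 ≤ I := intervalIntegral.integral_nonneg hb (fun x _ => hnn x)
  have hJ0 : 0 ≤ J := intervalIntegral.integral_nonneg hb (fun x _ => sq_nonneg (f x))
  have key : I ^ 2 ≤ b * J := by
    have h1 : ∀ x, f x * I ≤ b * f x ^ 2 / 2 + J / 2 := by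
      intro x
      have e1 : f x * I = ∫ y in (0:ℝ)..b, f x * f y := by
        rw [intervalIntegral.integral_const_mul]
      have e2 : (∫ y in (0:ℝ)..b, f x * f y)
          ≤ ∫ y in (0:ℝ)..b, (f x ^ 2 + f y ^ 2) / 2 := by
        apply intervalIntegral.integral_mono_on hb
          (hfint.const_mul _) (by apply IntervalIntegrable.div_const; exact
            (intervalIntegrable_const.add hf2int))
        intro y _
        nlinarith [sq_nonneg (f x - f y)]
      have e3 : (∫ y in (0:ℝ)..b, (f x ^ 2 + f y ^ 2) / 2) = b * f x ^ 2 / 2 + J / 2 := by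
        rw [show (fun y => (f x ^ 2 + f y ^ 2) / 2) = fun y => f x ^ 2 / 2 + f y ^ 2 / 2 by
          funext y; ring]
        rw [intervalIntegral.integral_add (intervalIntegrable_const)
          (hf2int.div_const 2), intervalIntegral.integral_const,
          intervalIntegral.integral_div]
        simp [smul_eq_mul]
        ring
      linarith [e1 ▸ e2.trans_eq e3]
    have h2 : I * I ≤ b * J / 2 + b * J / 2 := by
      have hmono := intervalIntegral.integral_mono_on hb (hfint.mul_const I)
        (((hf2int.const_mul b).div_const 2).add intervalIntegrable_const) (fun x _ => h1 x)
      rw [intervalIntegral.integral_mul_const] at hmono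
      have e4 : (∫ x in (0:ℝ)..b, (b * f x ^ 2 / 2 + J / 2)) = b * J / 2 + b * J / 2 := by
        have efun : (fun x : ℝ => b * f x ^ 2 / 2 + J / 2)
            = fun x => (b / 2) * f x ^ 2 + J / 2 := by funext x; ring
        rw [efun, intervalIntegral.integral_add (hf2int.const_mul _) intervalIntegrable_const,
          intervalIntegral.integral_const_mul, intervalIntegral.integral_const]
        simp only [smul_eq_mul, sub_zero]
        ring
      rw [e4] at hmono
      exact hmono
    nlinarith
  calc I = Real.sqrt (I ^ 2) := by rw [Real.sqrt_sq hI0]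
    _ ≤ Real.sqrt (b * J) := Real.sqrt_le_sqrt key
    _ = Real.sqrt b * Real.sqrt J := Real.sqrt_mul hb J

lemma core_poincare {K : ℕ} (F : Submodule ℝ (EuclideanSpace ℝ (Fin K)))
    (M : EuclideanSpace ℝ (Fin K) →L[ℝ] EuclideanSpace ℝ (Fin K)) {δ : ℝ} (hδ : 0 < δ)
    (hMF : ∀ y ∈ F, M y = y)
    (hlow : ∀ x, (∀ y ∈ F, ⟪x, y⟫ = 0) → δ * ‖x‖ ≤ ‖M x - x‖)
    (w : ℝ → EuclideanSpace ℝ (Fin K)) (hw : Differentiable ℝ w)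
    (hw' : Continuous (deriv w))
    (hbd : w (2 * π) = M (w 0))
    (horth : ∀ z ∈ F, (∫ θ in (0:ℝ)..(2 * π), ⟪w θ, z⟫) = 0) :
    (∫ θ in (0:ℝ)..(2 * π), ‖w θ‖ ^ 2)
      ≤ (4 * π ^ 2 * (2 + δ⁻¹) ^ 2) * ∫ θ in (0:ℝ)..(2 * π), ‖deriv w θ‖ ^ 2 := by
  have hπ : (0:ℝ) < 2 * π := by positivity
  have hwc : Continuous w := hw.continuous
  set J := ∫ θ in (0:ℝ)..(2 * π), ‖deriv w θ‖ ^ 2 with hJdef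
  have hJ0 : 0 ≤ J := intervalIntegral.integral_nonneg hπ.le (fun x _ => sq_nonneg _)
  set D := ∫ θ in (0:ℝ)..(2 * π), ‖deriv w θ‖ with hDdef
  have hD0 : 0 ≤ D := intervalIntegral.integral_nonneg hπ.le (fun x _ => norm_nonneg _)
  have hDle : D ≤ Real.sqrt (2 * π) * Real.sqrt J :=
    integral_abs_le_sqrt_mul_sqrt _ hw'.norm (fun x => norm_nonneg _) hπ.le
  have hD2 : D ^ 2 ≤ 2 * π * J := by
    have := mul_le_mul hDle hDle hD0 (by positivity)
    calc D ^ 2 = D * D := sq D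
      _ ≤ (Real.sqrt (2*π) * Real.sqrt J) * (Real.sqrt (2*π) * Real.sqrt J) := this
      _ = (Real.sqrt (2*π) * Real.sqrt (2*π)) * (Real.sqrt J * Real.sqrt J) := by ring
      _ = 2 * π * J := by rw [Real.mul_self_sqrt hπ.le, Real.mul_self_sqrt hJ0]
  -- FTC bound
  have hdist : ∀ θ ∈ Set.Icc (0:ℝ) (2 * π), ‖w θ - w 0‖ ≤ D := by
    intro θ hθ
    have hftc : (∫ s in (0:ℝ)..θ, deriv w s) = w θ - w 0 :=
      intervalIntegral.integral_deriv_eq_sub (fun x _ => hw.differentiableAt)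
        (hw'.intervalIntegrable 0 θ)
    rw [← hftc]
    calc ‖∫ s in (0:ℝ)..θ, deriv w s‖ ≤ ∫ s in (0:ℝ)..θ, ‖deriv w s‖ :=
        intervalIntegral.norm_integral_le_integral_norm hθ.1
      _ ≤ D := by
        apply intervalIntegral.integral_mono_interval le_rfl hθ.1 hθ.2
        · filter_upwards with x using norm_nonneg _
        · exact hw'.norm.intervalIntegrable 0 (2 * π)
  set a := w 0 with ha
  set p : EuclideanSpace ℝ (Fin K) := (F.orthogonalProjectionOnto a : EuclideanSpace ℝ (Fin K))
    with hp
  set q := a - p with hq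
  have hpF : p ∈ F := (F.orthogonalProjectionOnto a).2
  have hq_orth : ∀ y ∈ F, ⟪q, y⟫ = 0 := by
    intro y hy
    exact (Submodule.mem_orthogonal' F q).mp (F.sub_starProjection_mem_orthogonal a) y hy
  -- bound on q
  have hqD : δ * ‖q‖ ≤ D := by
    have h1 : M q - q = M a - a := by
      have : M q = M a - p := by rw [hq, map_sub, hMF p hpF]
      rw [this, hq]; abel
    have h2 := hlow q hq_orth
    rw [h1] at h2
    have h3 : ‖M a - a‖ = ‖w (2*π) - w 0‖ := by rw [hbd]
    have h4 : ‖w (2*π) - w 0‖ ≤ D := hdist (2*π) ⟨hπ.le, le_rfl⟩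
    calc δ * ‖q‖ ≤ ‖M a - a‖ := h2
      _ ≤ D := by rw [h3]; exact h4
  -- bound on p
  have hpD : ‖p‖ ≤ D := by
    have h0 : (∫ θ in (0:ℝ)..(2*π), ⟪w θ, p⟫) = 0 := horth p hpF
    have hap : ⟪a, p⟫ = ‖p‖ ^ 2 := by
      have : a = p + q := by rw [hq]; abel
      rw [this, inner_add_left, hq_orth p hpF, add_zero, real_inner_self_eq_norm_mul_norm]
      try ring
    have hcont : Continuous fun θ => ⟪a - w θ, p⟫ :=
      (continuous_const.sub hwc).inner continuous_const
    have hint : (∫ θ in (0:ℝ)..(2*π), ⟪a - w θ, p⟫) = 2 * π * ‖p‖ ^ 2 := by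
      have e : (fun θ => ⟪a - w θ, p⟫) = fun θ => ⟪a, p⟫ - ⟪w θ, p⟫ := by
        funext θ; rw [inner_sub_left]
      rw [e, intervalIntegral.integral_sub intervalIntegrable_const
        ((hwc.inner continuous_const).intervalIntegrable 0 (2*π)), h0,
        intervalIntegral.integral_const]
      simp only [smul_eq_mul, sub_zero]
      rw [hap]; try ring
    have habs : |∫ θ in (0:ℝ)..(2*π), ⟪a - w θ, p⟫| ≤ 2 * π * (D * ‖p‖) := by
      calc |∫ θ in (0:ℝ)..(2*π), ⟪a - w θ, p⟫|
          ≤ ∫ θ in (0:ℝ)..(2*π), |⟪a - w θ, p⟫| := by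
            simpa using intervalIntegral.norm_integral_le_integral_norm (μ := volume)
              (f := fun θ => ⟪a - w θ, p⟫) hπ.le
        _ ≤ ∫ θ in (0:ℝ)..(2*π), D * ‖p‖ := by
            apply intervalIntegral.integral_mono_on hπ.le
              (hcont.abs.intervalIntegrable 0 (2*π)) intervalIntegrable_const
            intro θ hθ
            calc |⟪a - w θ, p⟫| ≤ ‖a - w θ‖ * ‖p‖ := abs_real_inner_le_norm _ _
              _ ≤ D * ‖p‖ := by
                  apply mul_le_mul_of_nonneg_right _ (norm_nonneg p)
                  rw [show a - w θ = -(w θ - w 0) by rw [ha]; abel, norm_neg]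
                  exact hdist θ hθ
        _ = 2 * π * (D * ‖p‖) := by
            rw [intervalIntegral.integral_const]; simp [smul_eq_mul]
    rw [hint] at habs
    have h5 : 2 * π * ‖p‖ ^ 2 ≤ 2 * π * (D * ‖p‖) := (le_abs_self _).trans habs
    have h6 : ‖p‖ ^ 2 ≤ D * ‖p‖ := (mul_le_mul_iff_right₀ hπ).mp h5
    rcases (norm_nonneg p).eq_or_lt with h8 | h8
    · rw [← h8]; exact hD0
    · exact le_of_mul_le_mul_right (by nlinarith : ‖p‖ * ‖p‖ ≤ D * ‖p‖) h8
  -- assemble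
  have haD : ‖a‖ ≤ (1 + δ⁻¹) * D := by
    have : a = p + q := by rw [hq]; abel
    have hqD' : ‖q‖ ≤ δ⁻¹ * D := by
      have h7 : ‖q‖ = δ⁻¹ * (δ * ‖q‖) := by field_simp
      rw [h7]
      exact mul_le_mul_of_nonneg_left hqD (by positivity)
    calc ‖a‖ ≤ ‖p‖ + ‖q‖ := by rw [this]; exact norm_add_le _ _
      _ ≤ D + δ⁻¹ * D := add_le_add hpD hqD'
      _ = (1 + δ⁻¹) * D := by ring
  have hpt : ∀ θ ∈ Set.Icc (0:ℝ) (2*π), ‖w θ‖ ≤ (2 + δ⁻¹) * D := by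
    intro θ hθ
    calc ‖w θ‖ = ‖a + (w θ - a)‖ := by rw [ha]; congr 1; abel
      _ ≤ ‖a‖ + ‖w θ - a‖ := norm_add_le _ _
      _ ≤ (1 + δ⁻¹) * D + D := add_le_add haD (hdist θ hθ)
      _ = (2 + δ⁻¹) * D := by ring
  have hfinal : (∫ θ in (0:ℝ)..(2*π), ‖w θ‖ ^ 2) ≤ 2 * π * ((2 + δ⁻¹) * D) ^ 2 := by
    calc (∫ θ in (0:ℝ)..(2*π), ‖w θ‖ ^ 2) ≤ ∫ θ in (0:ℝ)..(2*π), ((2 + δ⁻¹) * D) ^ 2 := by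
          apply intervalIntegral.integral_mono_on hπ.le
            ((hwc.norm.pow 2).intervalIntegrable 0 (2*π)) intervalIntegrable_const
          intro θ hθ
          have := hpt θ hθ
          have h6 : (0:ℝ) ≤ (2 + δ⁻¹) * D := by positivity
          show ‖w θ‖ ^ 2 ≤ _
          nlinarith [norm_nonneg (w θ), pow_le_pow_left₀ (norm_nonneg _) this 2]
      _ = 2 * π * ((2 + δ⁻¹) * D) ^ 2 := by
          rw [intervalIntegral.integral_const]; simp [smul_eq_mul]; try ring
  calc (∫ θ in (0:ℝ)..(2*π), ‖w θ‖ ^ 2) ≤ 2 * π * ((2 + δ⁻¹) * D) ^ 2 := hfinal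
    _ = 2 * π * (2 + δ⁻¹) ^ 2 * D ^ 2 := by ring
    _ ≤ 2 * π * (2 + δ⁻¹) ^ 2 * (2 * π * J) := by
          exact mul_le_mul_of_nonneg_left hD2 (by positivity)
    _ = (4 * π ^ 2 * (2 + δ⁻¹) ^ 2) * J := by ring

lemma uniform_gap {K : ℕ}
    (M : ℕ → (EuclideanSpace ℝ (Fin K) →L[ℝ] EuclideanSpace ℝ (Fin K)))
    (Mα : EuclideanSpace ℝ (Fin K) →L[ℝ] EuclideanSpace ℝ (Fin K))
    (hconv : Tendsto M atTop (nhds Mα)) (N : ℕ)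
    (hker : ∀ x, Mα x = x → ∀ n, N ≤ n → M n x = x) :
    ∃ δ > 0, ∃ N' : ℕ, N ≤ N' ∧ ∀ n ≥ N', ∀ x : EuclideanSpace ℝ (Fin K),
      (∀ y, M n y = y → ⟪x, y⟫ = 0) → δ * ‖x‖ ≤ ‖M n x - x‖ := by
  by_contra hcon
  push_neg at hcon
  -- extract a bad sequence
  have hbad : ∀ k : ℕ, ∃ n : ℕ, n ≥ max N k ∧ ∃ x : EuclideanSpace ℝ (Fin K),
      (∀ y, M n y = y → ⟪x, y⟫ = 0) ∧ ‖x‖ = 1 ∧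
      ‖M n x - x‖ < (1 / (k + 1) : ℝ) := by
    intro k
    have hk : (0:ℝ) < 1 / (k + 1) := by positivity
    obtain ⟨n, hn, x, hxorth, hxlt⟩ := hcon (1 / (k + 1)) hk (max N k) (le_max_left _ _)
    have hx0 : x ≠ 0 := by
      intro h
      rw [h] at hxlt
      simp at hxlt
    refine ⟨n, hn, ‖x‖⁻¹ • x, ?_, ?_, ?_⟩
    · intro y hy
      rw [real_inner_smul_left, hxorth y hy, mul_zero]
    · rw [norm_smul]
      simp [norm_ne_zero_iff.mpr hx0]
    · have he : M n (‖x‖⁻¹ • x) - ‖x‖⁻¹ • x = ‖x‖⁻¹ • (M n x - x) := by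
        rw [_root_.map_smul, smul_sub]
      rw [he, norm_smul]
      have hxpos : 0 < ‖x‖ := norm_pos_iff.mpr hx0
      rw [show ‖(‖x‖⁻¹ : ℝ)‖ = ‖x‖⁻¹ by simp [abs_of_pos (inv_pos.mpr hxpos)]]
      calc ‖x‖⁻¹ * ‖M n x - x‖ < ‖x‖⁻¹ * (1 / (k+1) * ‖x‖) := by
            apply mul_lt_mul_of_pos_left hxlt (inv_pos.mpr hxpos)
        _ = 1 / (k+1) := by field_simp
  choose n hn y hyorth hynorm hylt using hbad
  -- compactness
  have hmem : ∀ k, y k ∈ Metric.sphere (0 : EuclideanSpace ℝ (Fin K)) 1 := by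
    intro k
    simp [Metric.mem_sphere, dist_zero_right, hynorm k]
  obtain ⟨x, hxmem, φ, hφmono, hφtend⟩ :=
    (isCompact_sphere (0 : EuclideanSpace ℝ (Fin K)) 1).tendsto_subseq hmem
  have hxnorm : ‖x‖ = 1 := by simpa [dist_zero_right] using hxmem
  -- n ∘ φ tends to atTop
  have hnφ : Tendsto (fun k => n (φ k)) atTop atTop := by
    apply tendsto_atTop_mono (fun k => ?_) tendsto_id
    calc (k : ℕ) ≤ φ k := hφmono.le_apply
      _ ≤ max N (φ k) := le_max_right _ _
      _ ≤ n (φ k) := hn (φ k)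
  have hMtend : Tendsto (fun k => M (n (φ k))) atTop (nhds Mα) := hconv.comp hnφ
  -- M (n (φ k)) (y (φ k)) → Mα x
  have happly : Tendsto (fun k => M (n (φ k)) (y (φ k)) - y (φ k)) atTop
      (nhds (Mα x - x)) := by
    have h1 : Tendsto (fun k => (M (n (φ k)), y (φ k))) atTop (nhds (Mα, x)) :=
      hMtend.prodMk_nhds hφtend
    have h2 : Continuous fun p : (EuclideanSpace ℝ (Fin K) →L[ℝ] EuclideanSpace ℝ (Fin K))
        × EuclideanSpace ℝ (Fin K) => p.1 p.2 := isBoundedBilinearMap_apply.continuous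
    exact ((h2.tendsto (Mα, x)).comp h1).sub hφtend
  -- the norms tend to 0
  have hfix : Mα x = x := by
    have hle : Tendsto (fun k => ‖M (n (φ k)) (y (φ k)) - y (φ k)‖) atTop
        (nhds ‖Mα x - x‖) := happly.norm
    have hub : ∀ k : ℕ, ‖M (n (φ k)) (y (φ k)) - y (φ k)‖ ≤ 1 / (k + 1) := by
      intro k
      calc ‖M (n (φ k)) (y (φ k)) - y (φ k)‖ ≤ 1 / (φ k + 1) := (hylt (φ k)).le
        _ ≤ 1 / (k + 1) := by
            apply one_div_le_one_div_of_le (by positivity)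
            have hkk : (k : ℝ) ≤ (φ k : ℝ) := Nat.cast_le.mpr hφmono.le_apply
            linarith
    have hzero : Tendsto (fun k : ℕ => (1 : ℝ) / (k + 1)) atTop (nhds 0) :=
      tendsto_one_div_add_atTop_nhds_zero_nat
    have hnn : ‖Mα x - x‖ ≤ 0 := le_of_tendsto_of_tendsto' hle hzero hub
    have : ‖Mα x - x‖ = 0 := le_antisymm hnn (norm_nonneg _)
    rw [norm_sub_eq_zero_iff] at this
    exact this
  -- contradiction via orthogonality
  have horthk : ∀ k, ⟪y (φ k), x⟫ = 0 := by
    intro k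
    apply hyorth (φ k) x
    exact hker x hfix (n (φ k)) (le_trans (le_max_left _ _) (hn (φ k)))
  have hinner : Tendsto (fun k => ⟪y (φ k), x⟫) atTop (nhds ⟪x, x⟫) :=
    hφtend.inner tendsto_const_nhds
  have h9 : Tendsto (fun k : ℕ => (0:ℝ)) atTop (nhds ⟪x, x⟫) := by
    rw [show (fun k : ℕ => (0:ℝ)) = fun k => ⟪y (φ k), x⟫ from
      funext (fun k => (horthk k).symm)]
    exact hinner
  have h10 : (⟪x, x⟫ : ℝ) = 0 := tendsto_nhds_unique h9 tendsto_const_nhds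
  rw [real_inner_self_eq_norm_mul_norm, hxnorm] at h10
  norm_num at h10

section MainProof

local notation "expR" => NormedSpace.exp

lemma periodic_deriv {K : ℕ} {f : ℝ → EuclideanSpace ℝ (Fin K)} {T : ℝ}
    (hf : Function.Periodic f T) : Function.Periodic (deriv f) T := by
  intro θ
  have h : (fun x => f (x + T)) = f := funext hf
  conv_rhs => rw [← h]
  rw [deriv_comp_add_const]

def fixSubmodule {K : ℕ} (M : EuclideanSpace ℝ (Fin K) →L[ℝ] EuclideanSpace ℝ (Fin K)) :
    Submodule ℝ (EuclideanSpace ℝ (Fin K)) where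
  carrier := {x | M x = x}
  add_mem' := by
    intro a b ha hb
    simp only [Set.mem_setOf_eq, map_add] at *
    rw [ha, hb]
  zero_mem' := by simp
  smul_mem' := by
    intro c a ha
    simp only [Set.mem_setOf_eq, _root_.map_smul] at *
    rw [ha]

lemma mem_fixSubmodule {K : ℕ} {M : EuclideanSpace ℝ (Fin K) →L[ℝ] EuclideanSpace ℝ (Fin K)}
    {x : EuclideanSpace ℝ (Fin K)} : x ∈ fixSubmodule M ↔ M x = x := Iff.rfl

lemma matCLM_tendsto {K : ℕ} {A : ℕ → Matrix (Fin K) (Fin K) ℝ} {α : Matrix (Fin K) (Fin K) ℝ}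
    (h : Tendsto A atTop (nhds α)) :
    Tendsto (fun n => matCLM (A n)) atTop (nhds (matCLM α)) := by
  have hlin : IsLinearMap ℝ (matCLM (K := K)) := by
    constructor
    · intro a b; ext1 x
      simp [matCLM, map_add]
    · intro c a; ext1 x
      simp [matCLM, _root_.map_smul]
  have hcont : Continuous (matCLM (K := K)) :=
    LinearMap.continuous_of_finiteDimensional (hlin.mk' _)
  exact (hcont.tendsto α).comp h

lemma flow_fix_neg {K : ℕ} {B : EuclideanSpace ℝ (Fin K) →L[ℝ] EuclideanSpace ℝ (Fin K)}
    {x : EuclideanSpace ℝ (Fin K)} (hx : expR ((2*π) • B) x = x) :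
    expR ((-(2*π)) • B) x = x := by
  conv_lhs => rw [← hx]
  have h := flow_cancel B (-(2*π)) x
  rwa [neg_neg] at h

lemma ker_preserved {K : ℕ} (Bn Bα : EuclideanSpace ℝ (Fin K) →L[ℝ] EuclideanSpace ℝ (Fin K))
    (hstep : ∀ u : ℝ → EuclideanSpace ℝ (Fin K), ContDiff ℝ 1 u →
      Function.Periodic u (2 * π) → (∀ θ, deriv u θ + Bα (u θ) = 0) →
      ∀ θ, deriv u θ + Bn (u θ) = 0)
    (x : EuclideanSpace ℝ (Fin K)) (hx : expR ((2*π) • Bα) x = x) :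
    expR ((2*π) • Bn) x = x := by
  set u : ℝ → EuclideanSpace ℝ (Fin K) := fun θ => expR (θ • (-Bα)) x with hu
  have hud : ∀ θ, HasDerivAt u ((-Bα) (u θ)) θ := by
    intro θ
    have h := hasDerivAt_flow (-Bα) x θ
    rwa [flow_comm] at h
  have hxfix : expR ((-(2*π)) • Bα) x = x := flow_fix_neg hx
  have hsmul : (2*π) • (-Bα) = (-(2*π)) • Bα := by module
  have hup : Function.Periodic u (2*π) := by
    intro θ
    show expR ((θ + 2*π) • (-Bα)) x = expR (θ • (-Bα)) x
    rw [flow_add (-Bα) θ (2*π) x, hsmul, hxfix]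
  have hu1 : ContDiff ℝ 1 u := by
    rw [contDiff_one_iff_deriv]
    constructor
    · exact fun θ => (hud θ).differentiableAt
    · have h : deriv u = fun θ => (-Bα) (u θ) := funext fun θ => (hud θ).deriv
      rw [h]
      exact (-Bα).continuous.comp
        (Differentiable.continuous fun θ => (hud θ).differentiableAt)
  have hαu : ∀ θ, deriv u θ + Bα (u θ) = 0 := by
    intro θ
    rw [(hud θ).deriv, ContinuousLinearMap.neg_apply]
    abel
  have hstep' := hstep u hu1 hup hαu
  have hBnu : ∀ θ, Bn (u θ) = Bα (u θ) := by
    intro θ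
    have h1 := hstep' θ
    have h2 := hαu θ
    have := h1.trans h2.symm
    exact add_left_cancel this
  have hg : ∀ θ, HasDerivAt (fun t => expR (t • Bn) (u t)) 0 θ := by
    intro θ
    have h1 := (hasDerivAt_exp_smul_const (𝕂 := ℝ) Bn θ).clm_apply (hud θ)
    refine h1.congr_deriv (Eq.symm ?_)
    simp only [ContinuousLinearMap.mul_apply, ContinuousLinearMap.neg_apply]
    rw [hBnu θ]
    rw [← map_add]
    simp
  have hgconst := is_const_of_deriv_eq_zero
    (fun θ => (hg θ).differentiableAt) (fun θ => (hg θ).deriv) (2*π) 0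
  have hu0 : u 0 = x := flow_zero (-Bα) x
  have hu2π : u (2*π) = x := by
    have := hup 0
    rw [zero_add] at this
    rw [this, hu0]
  rw [hu2π] at hgconst
  have h0 : expR ((0:ℝ) • Bn) (u 0) = x := by rw [flow_zero, hu0]
  rw [h0] at hgconst
  exact hgconst

set_option maxHeartbeats 2000000 in
/-- Uniform Poincaré inequality for a non-degenerating sequence of flat
connections on `S¹` (Lemma 4.5). -/
theorem uniform_poincare_nondegenerating (K : ℕ) (hK : 0 < K)
    (A : ℕ → Matrix (Fin K) (Fin K) ℝ) (α : Matrix (Fin K) (Fin K) ℝ)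
    (hAskew : ∀ n, (A n)ᵀ = -(A n)) (hαskew : αᵀ = -α)
    (hconv : Tendsto A atTop (nhds α))
    (hnondeg : ∃ N : ℕ, ∀ n ≥ N, ∀ u : ℝ → EuclideanSpace ℝ (Fin K),
      ContDiff ℝ 1 u → Function.Periodic u (2 * Real.pi) →
      (∀ θ : ℝ, deriv u θ + matAct α (u θ) = 0) →
      ∀ θ : ℝ, deriv u θ + matAct (A n) (u θ) = 0) :
    ∃ C > 0, ∃ N' : ℕ, ∀ n ≥ N', ∀ u : ℝ → EuclideanSpace ℝ (Fin K),
      ContDiff ℝ 2 u → Function.Periodic u (2 * Real.pi) →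
      (∫ θ in (0:ℝ)..(2 * Real.pi), ‖deriv u θ + matAct (A n) (u θ)‖ ^ 2) ≤
        C * ∫ θ in (0:ℝ)..(2 * Real.pi),
          ‖deriv (deriv u) θ + (2 : ℝ) • matAct (A n) (deriv u θ)
            + matAct (A n) (matAct (A n) (u θ))‖ ^ 2 := by
  obtain ⟨N, hN⟩ := hnondeg
  have hMconv : Tendsto (fun n => expR ((2*π) • matCLM (A n))) atTop
      (nhds (expR ((2*π) • matCLM α))) := by
    have h1 := matCLM_tendsto hconv
    have h2 : Continuous fun T : EuclideanSpace ℝ (Fin K) →L[ℝ] EuclideanSpace ℝ (Fin K) =>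
        expR ((2*π) • T) := NormedSpace.exp_continuous.comp (continuous_const_smul _)
    exact (h2.tendsto _).comp h1
  have hker : ∀ x, expR ((2*π) • matCLM α) x = x → ∀ n, N ≤ n →
      expR ((2*π) • matCLM (A n)) x = x := by
    intro x hx n hn
    exact ker_preserved (matCLM (A n)) (matCLM α)
      (fun u h1 h2 h3 => hN n hn u h1 h2 h3) x hx
  obtain ⟨δ, hδ, N', hNN', hgap⟩ :=
    uniform_gap (fun n => expR ((2*π) • matCLM (A n))) (expR ((2*π) • matCLM α)) hMconv N hker
  refine ⟨4 * π ^ 2 * (2 + δ⁻¹) ^ 2, by positivity, N', ?_⟩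
  intro n hn u hu hup
  set B := matCLM (A n) with hB
  have hBsk : ∀ a b, ⟪B a, b⟫ = -⟪a, B b⟫ := matCLM_skew (hAskew n)
  have hudiff : Differentiable ℝ u := hu.differentiable (by norm_num)
  have hder1 : ContDiff ℝ 1 (deriv u) := by
    have h2 : ContDiff ℝ ((1 : WithTop ℕ∞) + 1) u := by
      have e : ((1 : WithTop ℕ∞) + 1) = 2 := one_add_one_eq_two
      rw [e]; exact hu
    exact (contDiff_succ_iff_deriv.mp h2).2.2
  have hderdiff : Differentiable ℝ (deriv u) := hder1.differentiable one_ne_zero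
  have hdercont : Continuous (deriv u) := hderdiff.continuous
  have hder2cont : Continuous (deriv (deriv u)) := (contDiff_one_iff_deriv.mp hder1).2
  set v : ℝ → EuclideanSpace ℝ (Fin K) := fun θ => deriv u θ + B (u θ) with hv
  have hvd : ∀ θ, HasDerivAt v (deriv (deriv u) θ + B (deriv u θ)) θ := by
    intro θ
    exact ((hderdiff θ).hasDerivAt).add (B.hasFDerivAt.comp_hasDerivAt θ (hudiff θ).hasDerivAt)
  have hvdiff : Differentiable ℝ v := fun θ => (hvd θ).differentiableAt
  have hvcont : Continuous v := hvdiff.continuous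
  have hdv : deriv v = fun θ => deriv (deriv u) θ + B (deriv u θ) :=
    funext fun θ => (hvd θ).deriv
  have hdvcont : Continuous (deriv v) := by
    rw [hdv]; exact hder2cont.add (B.continuous.comp hdercont)
  have hvper : Function.Periodic v (2*π) := by
    intro θ
    show deriv u (θ + 2*π) + B (u (θ + 2*π)) = deriv u θ + B (u θ)
    rw [periodic_deriv hup θ, hup θ]
  set w : ℝ → EuclideanSpace ℝ (Fin K) := fun θ => expR (θ • B) (v θ) with hw
  have hwd : ∀ θ, HasDerivAt w (expR (θ • B) (B (v θ) + deriv v θ)) θ := by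
    intro θ
    have h1 := (hasDerivAt_exp_smul_const (𝕂 := ℝ) B θ).clm_apply ((hvdiff θ).hasDerivAt)
    refine h1.congr_deriv (Eq.symm ?_)
    simp only [ContinuousLinearMap.mul_apply]
    rw [map_add]
  have hwdiff : Differentiable ℝ w := fun θ => (hwd θ).differentiableAt
  have hwderiv : deriv w = fun θ => expR (θ • B) (B (v θ) + deriv v θ) :=
    funext fun θ => (hwd θ).deriv
  have hexpcont : Continuous fun θ : ℝ => expR (θ • B) :=
    NormedSpace.exp_continuous.comp (continuous_id.smul continuous_const)
  have hwdcont : Continuous (deriv w) := by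
    rw [hwderiv]
    exact isBoundedBilinearMap_apply.continuous.comp
      (hexpcont.prodMk ((B.continuous.comp hvcont).add hdvcont))
  have hbd : w (2*π) = expR ((2*π) • B) (w 0) := by
    show expR ((2*π) • B) (v (2*π)) = expR ((2*π) • B) (w 0)
    have hv2 : v (2*π) = v 0 := by
      have := hvper 0; rwa [zero_add] at this
    have hw0 : w 0 = v 0 := flow_zero B (v 0)
    rw [hv2, hw0]
  have horth : ∀ z ∈ fixSubmodule (expR ((2*π) • B)),
      (∫ θ in (0:ℝ)..(2*π), ⟪w θ, z⟫) = 0 := by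
    intro z hz
    have hzfix : expR ((-(2*π)) • B) z = z := flow_fix_neg hz
    have hhd : ∀ θ : ℝ, HasDerivAt (fun t => ⟪u t, expR (t • (-B)) z⟫) ⟪w θ, z⟫ θ := by
      intro θ
      have hz' : HasDerivAt (fun t : ℝ => expR (t • (-B)) z) ((-B) (expR (θ • (-B)) z)) θ := by
        have h := hasDerivAt_flow (-B) z θ
        rwa [flow_comm] at h
      have h1 := (hudiff θ).hasDerivAt.inner ℝ hz'
      refine h1.congr_deriv (Eq.symm ?_)
      have e2 : ⟪w θ, z⟫ = ⟪v θ, expR ((-θ) • B) z⟫ := inner_flow_left hBsk θ (v θ) z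
      have hsm : ((-θ) • B) = θ • (-B) := by module
      rw [e2, hsm]
      have e1 : ⟪u θ, (-B) (expR (θ • (-B)) z)⟫ = ⟪B (u θ), expR (θ • (-B)) z⟫ := by
        rw [ContinuousLinearMap.neg_apply, inner_neg_right, hBsk]
        try ring
      rw [e1]
      show ⟪deriv u θ + B (u θ), expR (θ • (-B)) z⟫
        = ⟪B (u θ), expR (θ • (-B)) z⟫ + ⟪deriv u θ, expR (θ • (-B)) z⟫
      rw [inner_add_left]
      ring
    have hint := intervalIntegral.integral_eq_sub_of_hasDerivAt
      (f := fun t => ⟪u t, expR (t • (-B)) z⟫) (a := (0:ℝ)) (b := 2*π)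
      (fun θ _ => hhd θ)
      ((Continuous.inner hwdiff.continuous continuous_const).intervalIntegrable 0 (2*π))
    rw [hint]
    have hu2π : u (2*π) = u 0 := by
      have := hup 0; rwa [zero_add] at this
    have hz2 : expR ((2*π) • (-B)) z = z := by
      have hsm2 : (2*π) • (-B) = (-(2*π)) • B := by module
      rw [hsm2, hzfix]
    have hz0 : expR ((0:ℝ) • (-B)) z = z := flow_zero (-B) z
    show ⟪u (2*π), expR ((2*π) • -B) z⟫ - ⟪u 0, expR ((0:ℝ) • -B) z⟫ = 0
    rw [hu2π, hz2, hz0]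
    ring
  have hcore := core_poincare (fixSubmodule (expR ((2*π) • B))) (expR ((2*π) • B)) hδ
    (fun y hy => hy) (fun x hx => hgap n hn x hx) w hwdiff hwdcont hbd horth
  have hL : ∀ θ, ‖deriv u θ + matAct (A n) (u θ)‖ ^ 2 = ‖w θ‖ ^ 2 := by
    intro θ
    have : w θ = expR (θ • B) (v θ) := rfl
    rw [this, norm_flow hBsk]
    rfl
  have hR : ∀ θ, ‖deriv (deriv u) θ + (2 : ℝ) • matAct (A n) (deriv u θ)
      + matAct (A n) (matAct (A n) (u θ))‖ ^ 2 = ‖deriv w θ‖ ^ 2 := by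
    intro θ
    have h1 : deriv w θ = expR (θ • B) (B (v θ) + deriv v θ) := by rw [hwderiv]
    rw [h1, norm_flow hBsk]
    congr 2
    have h2 : deriv v θ = deriv (deriv u) θ + B (deriv u θ) := by rw [hdv]
    rw [h2]
    have h3 : v θ = deriv u θ + B (u θ) := rfl
    rw [h3, map_add]
    have e1 : matAct (A n) (deriv u θ) = B (deriv u θ) := rfl
    have e2 : matAct (A n) (matAct (A n) (u θ)) = B (B (u θ)) := rfl
    rw [e1, e2, two_smul]
    abel
  have hLint : (∫ θ in (0:ℝ)..(2 * π), ‖deriv u θ + matAct (A n) (u θ)‖ ^ 2)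
      = ∫ θ in (0:ℝ)..(2 * π), ‖w θ‖ ^ 2 :=
    intervalIntegral.integral_congr (fun θ _ => hL θ)
  have hRint : (∫ θ in (0:ℝ)..(2 * π), ‖deriv (deriv u) θ + (2 : ℝ) • matAct (A n) (deriv u θ)
      + matAct (A n) (matAct (A n) (u θ))‖ ^ 2)
      = ∫ θ in (0:ℝ)..(2 * π), ‖deriv w θ‖ ^ 2 :=
    intervalIntegral.integral_congr (fun θ _ => hR θ)
  rw [hLint, hRint]
  exact hcore

end MainProof
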